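/- Let $\mathcal{X}$ and $\mathcal{Y}$ be lattice unconditional bases of Banach spaces $\mathbb{X}$ and $\mathbb{Y}$ with lattice unconditionality constants $C_1$ and $C_2$ respectively. Form $\mathcal{Z} = \mathcal{X}\ltimes\mathcal{Y}$, the basis of $\mathbb{X}\oplus_\infty\mathbb{Y}$ given by $\boldsymbol{z}_{2k-1}=(\boldsymbol{x}_k,0)$, $\boldsymbol{z}_{2k}=(-\boldsymbol{x}_k,\boldsymbol{y}_k)$. Then $\mathcal{Z}$ is flattening quasi-greedy: if $f, g \in \mathbb{X}\oplus\mathbb{Y}$ and $A$ is a finite set with $\boldsymbol{z}_n^*(f)=\boldsymbol{z}_n^*(g)$ and $|\boldsymbol{z}_n^*(f)|\le 1$ for $n\notin A$, while $|\boldsymbol{z}_n^*(f)|=1$ and $\boldsymbol{z}_n^*(g)/\boldsymbol{z}_n^*(f)\ge 1$ for $n\in A$, then $\|f\| \le \max\{C_1, C_2\}\|g\|$. -/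

import Mathlib

/-- The interleaved sequence `𝒳 ⋉ 𝒴`: `z_{2k} = (x_k, 0)`, `z_{2k+1} = (-x_k, y_k)`
(indexing from `0`). -/
def interleave {X Y : Type*} [AddCommGroup X] [AddCommGroup Y]
    (x : ℕ → X) (y : ℕ → Y) : ℕ → X × Y :=
  fun n => if n % 2 = 0 then (x (n / 2), 0) else (-x (n / 2), y (n / 2))

/-- The biorthogonal functionals of the interleaved basis:
`z*_{2k} = x*_k ∘ P_X + y*_k ∘ P_Y`, `z*_{2k+1} = y*_k ∘ P_Y`. -/
noncomputable def interleaveDual {X Y : Type*} [NormedAddCommGroup X] [NormedSpace ℂ X]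
    [NormedAddCommGroup Y] [NormedSpace ℂ Y]
    (xs : ℕ → X →L[ℂ] ℂ) (ys : ℕ → Y →L[ℂ] ℂ) : ℕ → (X × Y) →L[ℂ] ℂ :=
  fun n =>
    if n % 2 = 0 then
      (xs (n / 2)).comp (ContinuousLinearMap.fst ℂ X Y) +
        (ys (n / 2)).comp (ContinuousLinearMap.snd ℂ X Y)
    else (ys (n / 2)).comp (ContinuousLinearMap.snd ℂ X Y)

lemma realkey18 (a b r t1 t2 : ℝ) (ha : a ≤ 1) (hb : b ≤ 1)
    (hr : r ≤ a * b) (h1 : 1 ≤ t1) (h2 : 1 ≤ t2)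
    (e1 : 1 < t1 → a = 1) (e2 : 1 < t2 → b = 1) :
    a^2 + b^2 - 2*r ≤ t1^2 * a^2 + t2^2 * b^2 - 2*(t1*t2)*r := by
  rcases h1.eq_or_lt with h1' | h1' <;> rcases h2.eq_or_lt with h2' | h2'
  · subst h1'; subst h2'; nlinarith
  · subst h1'; obtain rfl := e2 h2'
    nlinarith [mul_nonneg (sub_nonneg.mpr h2) (by nlinarith : (0:ℝ) ≤ t2 + 1 - 2*r)]
  · subst h2'; obtain rfl := e1 h1'
    nlinarith [mul_nonneg (sub_nonneg.mpr h1) (by nlinarith : (0:ℝ) ≤ t1 + 1 - 2*r)]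
  · obtain rfl := e1 h1'; obtain rfl := e2 h2'
    nlinarith [sq_nonneg (t1 - t2),
      mul_nonneg (by linarith : (0:ℝ) ≤ 1 - r)
        (by nlinarith : (0:ℝ) ≤ t1 * t2 - 1)]

lemma key18 (z1 z2 : ℂ) (t1 t2 : ℝ) (h1 : 1 ≤ t1) (h2 : 1 ≤ t2)
    (ha : ‖z1‖ ≤ 1) (hb : ‖z2‖ ≤ 1)
    (e1 : 1 < t1 → ‖z1‖ = 1) (e2 : 1 < t2 → ‖z2‖ = 1) :
    ‖z1 - z2‖ ≤ ‖(t1:ℂ)*z1 - (t2:ℂ)*z2‖ := by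
  have h0 : (0:ℝ) ≤ ‖(t1:ℂ)*z1 - (t2:ℂ)*z2‖ := norm_nonneg _
  rw [← Real.sqrt_sq (norm_nonneg (z1 - z2)), ← Real.sqrt_sq h0]
  apply Real.sqrt_le_sqrt
  rw [Complex.sq_norm, Complex.sq_norm]
  have hr : (z1 * (starRingEnd ℂ) z2).re ≤ ‖z1‖ * ‖z2‖ := by
    calc (z1 * (starRingEnd ℂ) z2).re ≤ ‖z1 * (starRingEnd ℂ) z2‖ :=
          Complex.re_le_norm _
      _ = ‖z1‖ * ‖z2‖ := by rw [norm_mul, Complex.norm_conj]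
  have n1 : Complex.normSq (z1 - z2) =
      Complex.normSq z1 + Complex.normSq z2 - 2 * (z1 * (starRingEnd ℂ) z2).re :=
    Complex.normSq_sub z1 z2
  have n2 : Complex.normSq ((t1:ℂ)*z1 - (t2:ℂ)*z2) =
      t1^2 * Complex.normSq z1 + t2^2 * Complex.normSq z2
        - 2 * (t1 * t2) * (z1 * (starRingEnd ℂ) z2).re := by
    rw [Complex.normSq_sub]
    simp [Complex.normSq_mul, Complex.normSq_ofReal]
    ring_nf
  have s1 : Complex.normSq z1 = (‖z1‖)^2 := (Complex.sq_norm z1).symm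
  have s2 : Complex.normSq z2 = (‖z2‖)^2 := (Complex.sq_norm z2).symm
  rw [n1, n2, s1, s2]
  exact realkey18 _ _ _ _ _ ha hb hr h1 h2 e1 e2

theorem stmt18 {X Y : Type*} [NormedAddCommGroup X] [NormedSpace ℂ X]
    [NormedAddCommGroup Y] [NormedSpace ℂ Y]
    (x : ℕ → X) (y : ℕ → Y)
    (xs : ℕ → X →L[ℂ] ℂ) (ys : ℕ → Y →L[ℂ] ℂ)
    (hxbi : ∀ n k, xs n (x k) = if n = k then 1 else 0)
    (hybi : ∀ n k, ys n (y k) = if n = k then 1 else 0)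
    (C₁ C₂ : ℝ)
    (hC₁ : ∀ f g : X, (∀ n, ‖xs n f‖ ≤ ‖xs n g‖) → ‖f‖ ≤ C₁ * ‖g‖)
    (hC₂ : ∀ f g : Y, (∀ n, ‖ys n f‖ ≤ ‖ys n g‖) → ‖f‖ ≤ C₂ * ‖g‖)
    (f g : X × Y) (A : Finset ℕ)
    (hout : ∀ n ∉ A, interleaveDual xs ys n f = interleaveDual xs ys n g ∧
      ‖interleaveDual xs ys n f‖ ≤ 1)
    (hin : ∀ n ∈ A, ‖interleaveDual xs ys n f‖ = 1 ∧
      ∃ t : ℝ, 1 ≤ t ∧ interleaveDual xs ys n g = (t : ℂ) * interleaveDual xs ys n f) :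
    ‖f‖ ≤ max C₁ C₂ * ‖g‖ := by
  set D := interleaveDual xs ys with hD
  -- for every index, get a uniform representation
  have get : ∀ n : ℕ, ∃ t : ℝ, 1 ≤ t ∧ D n g = (t : ℂ) * D n f ∧
      ‖D n f‖ ≤ 1 ∧ (1 < t → ‖D n f‖ = 1) := by
    intro n
    by_cases hn : n ∈ A
    · obtain ⟨habs, t, ht, hv⟩ := hin n hn
      exact ⟨t, ht, hv, le_of_eq habs, fun _ => habs⟩
    · obtain ⟨heq, habs⟩ := hout n hn
      exact ⟨1, le_refl 1, by rw [← heq]; simp, habs, fun h => absurd h (lt_irrefl 1)⟩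
  -- evaluation formulas
  have Deven : ∀ (k : ℕ) (h : X × Y), D (2*k) h = xs k h.1 + ys k h.2 := by
    intro k h
    simp [hD, interleaveDual, Nat.mul_div_cancel_left k (by norm_num : 0 < 2)]
  have Dodd : ∀ (k : ℕ) (h : X × Y), D (2*k+1) h = ys k h.2 := by
    intro k h
    have h1 : (2*k+1) % 2 = 1 := by omega
    have h2 : (2*k+1) / 2 = k := by omega
    simp [hD, interleaveDual, h1, h2]
  have hxrec : ∀ (k : ℕ) (h : X × Y), xs k h.1 = D (2*k) h - D (2*k+1) h := by
    intro k h; rw [Deven, Dodd]; ring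
  -- coordinate domination for x
  have hx : ∀ n, ‖xs n f.1‖ ≤ ‖xs n g.1‖ := by
    intro n
    obtain ⟨t1, ht1, hv1, ha1, he1⟩ := get (2*n)
    obtain ⟨t2, ht2, hv2, ha2, he2⟩ := get (2*n+1)
    rw [hxrec n f, hxrec n g, hv1, hv2]
    exact key18 _ _ _ _ ht1 ht2 ha1 ha2 he1 he2
  have hy : ∀ n, ‖ys n f.2‖ ≤ ‖ys n g.2‖ := by
    intro n
    obtain ⟨t2, ht2, hv2, ha2, he2⟩ := get (2*n+1)
    rw [← Dodd n f, ← Dodd n g, hv2, norm_mul]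
    have : ‖((t2:ℂ))‖ = t2 := by
      rw [Complex.norm_real, Real.norm_eq_abs]; exact abs_of_pos (lt_of_lt_of_le one_pos ht2)
    rw [this]
    nlinarith [norm_nonneg (D (2*n+1) f)]
  -- the constants are at least 1
  have hx0 : x 0 ≠ 0 := by
    intro h
    have := hxbi 0 0
    rw [h] at this
    simp at this
  have hy0 : y 0 ≠ 0 := by
    intro h
    have := hybi 0 0
    rw [h] at this
    simp at this
  have hC1pos : 1 ≤ C₁ := by
    have := hC₁ (x 0) (x 0) (fun n => le_refl _)
    have hn : 0 < ‖x 0‖ := norm_pos_iff.mpr hx0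
    nlinarith
  have hC2pos : 1 ≤ C₂ := by
    have := hC₂ (y 0) (y 0) (fun n => le_refl _)
    have hn : 0 < ‖y 0‖ := norm_pos_iff.mpr hy0
    nlinarith
  -- conclude
  have h1 : ‖f.1‖ ≤ C₁ * ‖g.1‖ := hC₁ f.1 g.1 hx
  have h2 : ‖f.2‖ ≤ C₂ * ‖g.2‖ := hC₂ f.2 g.2 hy
  have hg1 : ‖g.1‖ ≤ ‖g‖ := norm_fst_le g
  have hg2 : ‖g.2‖ ≤ ‖g‖ := norm_snd_le g
  have hf : ‖f‖ = max ‖f.1‖ ‖f.2‖ := rfl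
  rw [hf]
  apply max_le
  · calc ‖f.1‖ ≤ C₁ * ‖g.1‖ := h1
      _ ≤ C₁ * ‖g‖ := by nlinarith
      _ ≤ max C₁ C₂ * ‖g‖ := mul_le_mul_of_nonneg_right (le_max_left _ _) (norm_nonneg g)
  · calc ‖f.2‖ ≤ C₂ * ‖g.2‖ := h2
      _ ≤ C₂ * ‖g‖ := by nlinarith
      _ ≤ max C₁ C₂ * ‖g‖ := mul_le_mul_of_nonneg_right (le_max_right _ _) (norm_nonneg g)
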